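/- Let n = 2m. For each s = 1,…,2m let a^{(s)} = (a^{(s)}_1 < ⋯ < a^{(s)}_s) be an increasing sequence of length s in {1,…,2m}. Then the product ∏_{s=1}^{2m} det N_{⌊s/2⌋,⌈s/2⌉}(g, h; a^{(s)}), computed for the generic matrices g and h over P, lies in the ideal power D^{m²}. -/
import Mathlib

open MvPolynomial

def Nmat {R : Type*} [CommRing R] {n : ℕ} (i j : ℕ)
    (g h : Matrix (Fin n) (Fin n) R) (a : Fin (i + j) → Fin n) :
    Matrix (Fin (i + j)) (Fin (i + j)) R :=
  Matrix.of fun s t =>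
    if (t : ℕ) < i then
      (if hi : (t : ℕ) < n then g (a s) ⟨t, hi⟩ else 0)
    else
      (if hj : (t : ℕ) - i < n then h (a s) ⟨(t : ℕ) - i, hj⟩ else 0)

/-- The minor `m(g;b)` of `g` with rows `b` and columns `1, …, s` (1-based), i.e.
columns `0, …, s-1` (0-based).  (Out-of-range column indices, which never occur
when `s ≤ n`, give junk value `0`.) -/
def minorM {R : Type*} [CommRing R] {n s : ℕ}
    (g : Matrix (Fin n) (Fin n) R) (b : Fin s → Fin n) : R :=
  (Matrix.of fun p q : Fin s =>
    if hq : (q : ℕ) < n then g (b p) ⟨q, hq⟩ else 0).det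

lemma prod_mem_pow_sum {ι R : Type*} [CommRing R] (I : Ideal R) (S : Finset ι)
    (f : ι → R) (e : ι → ℕ) (hf : ∀ s ∈ S, f s ∈ I ^ e s) :
    (∏ s ∈ S, f s) ∈ I ^ (∑ s ∈ S, e s) := by
  classical
  induction S using Finset.cons_induction with
  | empty => simp
  | cons x S hx ih =>
    rw [Finset.prod_cons, Finset.sum_cons, pow_add]
    exact Ideal.mul_mem_mul (hf x (Finset.mem_cons_self _ _))
      (ih fun s hs => hf s (Finset.mem_cons_of_mem hs))

lemma detcols {R : Type*} [CommRing R] {n i j : ℕ} (hij : i ≤ j)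
    (g h : Matrix (Fin n) (Fin n) R) (a : Fin (i + j) → Fin n) :
    ∀ r, r ≤ i →
    (Matrix.of fun s t : Fin (i + j) =>
      if ht : (t : ℕ) < r ∧ r ≤ i then
        Nmat i j g h a s t - Nmat i j g h a s ⟨i + (t : ℕ), by omega⟩
      else Nmat i j g h a s t).det = (Nmat i j g h a).det := by
  intro r
  induction r with
  | zero =>
    intro _
    have he : (Matrix.of fun s t : Fin (i + j) =>
      if ht : (t : ℕ) < 0 ∧ 0 ≤ i then
        Nmat i j g h a s t - Nmat i j g h a s ⟨i + (t : ℕ), by omega⟩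
      else Nmat i j g h a s t) = Nmat i j g h a := by
      ext s t
      rw [Matrix.of_apply, dif_neg (by omega)]
    rw [he]
  | succ r ih =>
    intro hr
    have hri : r < i := hr
    have hr' : r ≤ i := le_of_lt hri
    have hrij : r < i + j := by omega
    have hirij : i + r < i + j := by omega
    set A : Matrix (Fin (i+j)) (Fin (i+j)) R := Matrix.of fun s t : Fin (i + j) =>
      if ht : (t : ℕ) < r ∧ r ≤ i then
        Nmat i j g h a s t - Nmat i j g h a s ⟨i + (t : ℕ), by omega⟩
      else Nmat i j g h a s t with hA
    have hne : (⟨r, hrij⟩ : Fin (i+j)) ≠ ⟨i + r, hirij⟩ := by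
      simp [Fin.ext_iff]; omega
    have key : (Matrix.of fun s t : Fin (i + j) =>
        if ht : (t : ℕ) < r + 1 ∧ r + 1 ≤ i then
          Nmat i j g h a s t - Nmat i j g h a s ⟨i + (t : ℕ), by omega⟩
        else Nmat i j g h a s t) =
        A.updateCol ⟨r, hrij⟩ (fun s => A s ⟨r, hrij⟩ + (-1 : R) • A s ⟨i + r, hirij⟩) := by
      ext s t
      by_cases htr : t = ⟨r, hrij⟩
      · subst htr
        rw [Matrix.updateCol_self]
        simp only [hA, Matrix.of_apply]
        rw [dif_pos (by constructor <;> omega), dif_neg (by omega),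
          dif_neg (by omega)]
        rw [neg_one_smul, ← sub_eq_add_neg]
      · rw [Matrix.updateCol_ne htr]
        simp only [hA, Matrix.of_apply]
        have : (t : ℕ) ≠ r := fun hc => htr (Fin.ext hc)
        by_cases h1 : (t : ℕ) < r
        · rw [dif_pos (by omega), dif_pos (by constructor <;> omega)]
        · rw [dif_neg (by omega), dif_neg (by omega)]
    rw [key, Matrix.det_updateCol_add_smul_self A hne]
    exact ih hr'

lemma keylemma {R : Type*} [CommRing R] {n i j : ℕ} (hij : i ≤ j) (hn : i + j ≤ n)
    (g h : Matrix (Fin n) (Fin n) R) (a : Fin (i + j) → Fin n) (D : Ideal R)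
    (hD : ∀ p q, g p q - h p q ∈ D) :
    (Nmat i j g h a).det ∈ D ^ i := by
  classical
  rw [← detcols hij g h a i le_rfl]
  rw [Matrix.det_apply]
  apply Ideal.sum_mem
  intro σ _
  rw [Units.smul_def, zsmul_eq_mul]
  apply Ideal.mul_mem_left
  have hsum : (∑ t : Fin (i + j), if (t : ℕ) < i then 1 else 0) = i := by
    rw [Fin.sum_univ_eq_sum_range (fun t => if t < i then 1 else 0) (i + j)]
    rw [← Finset.sum_subset (Finset.range_subset_range.mpr (by omega : i ≤ i + j))
      (fun x _ hx => by rw [if_neg (by simpa using hx)])]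
    rw [Finset.sum_congr rfl (fun x hx => if_pos (Finset.mem_range.mp hx))]
    simp
  suffices hmem : _ ∈ D ^ (∑ t : Fin (i + j), if (t : ℕ) < i then 1 else 0) by
    rwa [hsum] at hmem
  apply prod_mem_pow_sum
  intro t _
  by_cases ht : (t : ℕ) < i
  · rw [if_pos ht, pow_one]
    simp only [Matrix.of_apply]
    rw [dif_pos ⟨ht, le_rfl⟩]
    have h1 : (t : ℕ) < n := by omega
    have h2 : (i + (t : ℕ)) - i < n := by omega
    simp only [Nmat, Matrix.of_apply]
    rw [if_pos ht, dif_pos h1, if_neg (by omega : ¬ (i + (t:ℕ)) < i), dif_pos h2]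
    have : (⟨(i + (t:ℕ)) - i, h2⟩ : Fin n) = ⟨t, h1⟩ := by
      simp [Fin.ext_iff]
    rw [this]
    exact hD _ _
  · rw [if_neg ht, pow_zero, Ideal.one_eq_top]
    trivial

lemma sum_halves (m : ℕ) : (∑ s ∈ Finset.Icc 1 (2 * m), s / 2) = m ^ 2 := by
  induction m with
  | zero => simp
  | succ m ih =>
    have h1 : 2 * (m + 1) = (2 * m + 1) + 1 := by omega
    rw [h1, Finset.sum_Icc_succ_top (by omega), Finset.sum_Icc_succ_top (by omega), ih]
    have : (m + 1) ^ 2 = m ^ 2 + 2 * m + 1 := by ring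
    omega

theorem stmt16 (k : Type*) [Field k] (m : ℕ) (hm : 1 ≤ m)
    (a : (s : ℕ) → Fin (s / 2 + (s - s / 2)) → Fin (2 * m))
    (ha : ∀ s ∈ Finset.Icc 1 (2 * m), StrictMono (a s)) :
    (∏ s ∈ Finset.Icc 1 (2 * m),
      (Nmat (s / 2) (s - s / 2)
        (Matrix.of fun s t : Fin (2 * m) =>
          (X (Sum.inl (s, t)) :
            MvPolynomial ((Fin (2 * m) × Fin (2 * m)) ⊕ (Fin (2 * m) × Fin (2 * m))) k))
        (Matrix.of fun s t : Fin (2 * m) => X (Sum.inr (s, t))) (a s)).det) ∈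
      (Ideal.span (Set.range fun p : Fin (2 * m) × Fin (2 * m) =>
        (X (Sum.inl p) - X (Sum.inr p) :
          MvPolynomial ((Fin (2 * m) × Fin (2 * m)) ⊕ (Fin (2 * m) × Fin (2 * m))) k))) ^
        (m ^ 2) := by
  rw [← sum_halves m]
  apply prod_mem_pow_sum
  intro s hs
  have hs' : 1 ≤ s ∧ s ≤ 2 * m := Finset.mem_Icc.mp hs
  apply keylemma (by omega) (by omega)
  intro p q
  exact Ideal.subset_span ⟨(p, q), rfl⟩
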